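/- Approximable mappings between domain prelocales are closed under relational composition, and the relation id_A given by a id_A b ⟺ a ≤_A b is an identity for this composition; hence domain prelocales and approximable mappings form a category. -/

import Mathlib

/-- A coherent prelocale: a preordered set with distributive-lattice structure
up to the induced equivalence. -/
structure Prelocale (α : Type*) where
  le : α → α → Prop
  bot : α
  top : α
  sup : α → α → α
  inf : α → α → α
  le_refl : ∀ a, le a a
  le_trans : ∀ a b c, le a b → le b c → le a c
  bot_le : ∀ a, le bot a
  sup_le : ∀ a b c, le a c → le b c → le (sup a b) c
  le_sup_left : ∀ a b, le a (sup a b)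
  le_sup_right : ∀ a b, le b (sup a b)
  le_top : ∀ a, le a top
  le_inf : ∀ a b c, le a b → le a c → le a (inf b c)
  inf_le_left : ∀ a b, le (inf a b) a
  inf_le_right : ∀ a b, le (inf a b) b
  distrib : ∀ a b c, le (inf a (sup b c)) (sup (inf a b) (inf a c))

namespace Prelocale

variable {α : Type*}

/-- The equivalence `a = b` induced by mutual entailment. -/
def eqv (A : Prelocale α) (a b : α) : Prop := A.le a b ∧ A.le b a

/-- `a` is prime. -/
def prime (A : Prelocale α) (a : α) : Prop :=
  ∀ b c, A.le a (A.sup b c) → A.le a b ∨ A.le a c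

/-- `a` is consistent. -/
def con (A : Prelocale α) (a : α) : Prop := ¬ A.eqv a A.bot

/-- Finite joins. -/
def joinList (A : Prelocale α) : List α → α
  | [] => A.bot
  | a :: l => A.sup a (A.joinList l)

end Prelocale

/-- A domain prelocale: a coherent prelocale satisfying (d1)–(d3). -/
structure DomainPrelocale (α : Type*) extends Prelocale α where
  d1 : ∀ a, ∃ l : List α, (∀ b ∈ l, toPrelocale.prime b) ∧
        toPrelocale.eqv a (toPrelocale.joinList l)
  d2 : toPrelocale.prime top ∧ toPrelocale.con top
  d3 : ∀ a b, toPrelocale.prime a → toPrelocale.prime b →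
        toPrelocale.prime (inf a b)

/-- Approximable mappings `R : A → B` between prelocales (axioms r1–r7). -/
def IsApproxMap {α β : Type*} (A : Prelocale α) (B : Prelocale β)
    (R : α → β → Prop) : Prop :=
  (∀ a, R a B.top) ∧
  (∀ a b c, R a b → R a c → R a (B.inf b c)) ∧
  (∀ b, R A.bot b) ∧
  (∀ a b c, R a c → R b c → R (A.sup a b) c) ∧
  (∀ a a' b' c, A.le a a' → R a' b' → B.le b' c → R a c) ∧
  (∀ a, R a B.bot → A.eqv a A.bot) ∧
  (∀ a b c, A.prime a → R a (B.sup b c) → R a b ∨ R a c)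

/-- Relational composition. -/
def RelComp {α β γ : Type*} (R : α → β → Prop) (S : β → γ → Prop)
    (a : α) (c : γ) : Prop :=
  ∃ b, R a b ∧ S b c

/-- The identity approximable mapping on `A`. -/
def idMap {α : Type*} (A : Prelocale α) (a b : α) : Prop := A.le a b

lemma mem_le_joinList {α : Type*} (A : Prelocale α) :
    ∀ (l : List α), ∀ p ∈ l, A.le p (A.joinList l) := by
  intro l
  induction l with
  | nil => intro p hp; cases hp
  | cons a l ih =>
    intro p hp
    rcases List.mem_cons.mp hp with h | h
    · subst h; exact A.le_sup_left _ _
    · exact A.le_trans _ _ _ (ih p h) (A.le_sup_right _ _)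

/-- Split a join of primes according to a disjunction. -/
lemma split_join {α β : Type*} (A : Prelocale α) (B : Prelocale β)
    (S : α → β → Prop) (hS : IsApproxMap A B S) (c c' : β) :
    ∀ (l : List α), (∀ p ∈ l, S p c ∨ S p c') →
      ∃ b₁ b₂, A.le (A.joinList l) (A.sup b₁ b₂) ∧ S b₁ c ∧ S b₂ c' := by
  obtain ⟨_, _, r3, r4, _, _, _⟩ := hS
  intro l
  induction l with
  | nil =>
    intro _
    exact ⟨A.bot, A.bot, A.bot_le _, r3 c, r3 c'⟩
  | cons p l ih =>
    intro h
    obtain ⟨b₁, b₂, hle, h₁, h₂⟩ := ih fun q hq => h q (List.mem_cons_of_mem _ hq)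
    rcases h p List.mem_cons_self with hp | hp
    · refine ⟨A.sup p b₁, b₂, ?_, r4 _ _ _ hp h₁, h₂⟩
      refine A.sup_le _ _ _ ?_ ?_
      · exact A.le_trans _ _ _ (A.le_sup_left p b₁) (A.le_sup_left _ _)
      · refine A.le_trans _ _ _ hle (A.sup_le _ _ _ ?_ (A.le_sup_right _ _))
        exact A.le_trans _ _ _ (A.le_sup_right p b₁) (A.le_sup_left _ _)
    · refine ⟨b₁, A.sup p b₂, ?_, h₁, r4 _ _ _ hp h₂⟩
      refine A.sup_le _ _ _ ?_ ?_
      · exact A.le_trans _ _ _ (A.le_sup_left p b₂) (A.le_sup_right _ _)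
      · refine A.le_trans _ _ _ hle (A.sup_le _ _ _ (A.le_sup_left _ _) ?_)
        exact A.le_trans _ _ _ (A.le_sup_right p b₂) (A.le_sup_right _ _)

/-- Approximable mappings between domain prelocales are closed under relational
composition; `id_A` given by entailment is an approximable mapping and is an
identity for composition; composition is associative.  Hence domain prelocales
and approximable mappings form a category. -/
theorem approx_maps_form_category {α β γ δ : Type*}
    (A : DomainPrelocale α) (B : DomainPrelocale β) (C : DomainPrelocale γ)
    (D : DomainPrelocale δ)
    (R : α → β → Prop) (S : β → γ → Prop) (Q : γ → δ → Prop) :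
    (IsApproxMap A.toPrelocale B.toPrelocale R →
      IsApproxMap B.toPrelocale C.toPrelocale S →
      IsApproxMap A.toPrelocale C.toPrelocale (RelComp R S)) ∧
    IsApproxMap A.toPrelocale A.toPrelocale (idMap A.toPrelocale) ∧
    (IsApproxMap A.toPrelocale B.toPrelocale R →
      RelComp R (idMap B.toPrelocale) = R ∧
      RelComp (idMap A.toPrelocale) R = R) ∧
    RelComp (RelComp R S) Q = RelComp R (RelComp S Q) := by
  refine ⟨?_, ?_, ?_, ?_⟩
  · -- composition
    intro hR hS
    obtain ⟨r1, r2, r3, r4, r5, r6, r7⟩ := hR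
    obtain ⟨s1, s2, s3, s4, s5, s6, s7⟩ := hS
    refine ⟨?_, ?_, ?_, ?_, ?_, ?_, ?_⟩
    · intro a; exact ⟨B.top, r1 a, s1 _⟩
    · rintro a c c' ⟨b, hab, hbc⟩ ⟨b', hab', hbc'⟩
      refine ⟨B.inf b b', r2 _ _ _ hab hab', s2 _ _ _ ?_ ?_⟩
      · exact s5 _ b c _ (B.inf_le_left b b') hbc (C.le_refl c)
      · exact s5 _ b' c' _ (B.inf_le_right b b') hbc' (C.le_refl c')
    · intro c; exact ⟨B.bot, r3 _, s3 c⟩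
    · rintro a a' c ⟨b, hab, hbc⟩ ⟨b', hab', hbc'⟩
      refine ⟨B.sup b b', r4 _ _ _ ?_ ?_, s4 _ _ _ hbc hbc'⟩
      · exact r5 a a b _ (A.le_refl a) hab (B.le_sup_left b b')
      · exact r5 a' a' b' _ (A.le_refl a') hab' (B.le_sup_right b b')
    · rintro a a' b' c h1 ⟨b, hab, hbc⟩ h2
      exact ⟨b, r5 _ _ _ _ h1 hab (B.le_refl b),
        s5 _ _ _ _ (B.le_refl b) hbc h2⟩
    · rintro a ⟨b, hab, hbc⟩
      have hb := s6 b hbc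
      exact r6 a (r5 a a b _ (A.le_refl a) hab hb.1)
    · rintro a c c' hpa ⟨b, hab, hbc⟩
      obtain ⟨l, hlp, hle⟩ := B.d1 b
      have hsplit : ∀ p ∈ l, S p c ∨ S p c' := by
        intro p hp
        have hpb : B.le p b :=
          B.le_trans _ _ _ (mem_le_joinList B.toPrelocale l p hp) hle.2
        exact s7 p c c' (hlp p hp) (s5 p b _ _ hpb hbc (C.le_refl _))
      obtain ⟨b₁, b₂, hjle, h₁, h₂⟩ :=
        split_join B.toPrelocale C.toPrelocale S ⟨s1, s2, s3, s4, s5, s6, s7⟩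
          c c' l hsplit
      have hbl : B.le b (B.sup b₁ b₂) := B.le_trans _ _ _ hle.1 hjle
      have : R a (B.sup b₁ b₂) := r5 a a b _ (A.le_refl a) hab hbl
      rcases r7 a b₁ b₂ hpa this with h | h
      · exact Or.inl ⟨b₁, h, h₁⟩
      · exact Or.inr ⟨b₂, h, h₂⟩
  · -- idMap is approximable
    refine ⟨A.le_top, A.le_inf, A.bot_le, A.sup_le, ?_, ?_, ?_⟩
    · intro a a' b' c h1 h2 h3
      exact A.le_trans _ _ _ h1 (A.le_trans _ _ _ h2 h3)
    · intro a h; exact ⟨h, A.bot_le a⟩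
    · intro a b c hp h; exact hp b c h
  · -- identity laws
    intro hR
    obtain ⟨r1, r2, r3, r4, r5, r6, r7⟩ := hR
    constructor
    · funext a b
      apply propext
      constructor
      · rintro ⟨b', h1, h2⟩; exact r5 a a b' b (A.le_refl a) h1 h2
      · intro h; exact ⟨b, h, B.le_refl b⟩
    · funext a b
      apply propext
      constructor
      · rintro ⟨a', h1, h2⟩; exact r5 a a' b b h1 h2 (B.le_refl b)
      · intro h; exact ⟨a, A.le_refl a, h⟩
  · -- associativity
    funext a d
    apply propext
    constructor
    · rintro ⟨c, ⟨b, hab, hbc⟩, hcd⟩; exact ⟨b, hab, c, hbc, hcd⟩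
    · rintro ⟨b, hab, c, hbc, hcd⟩; exact ⟨c, ⟨b, hab, hbc⟩, hcd⟩
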